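/- For every x ∈ ℝⁿ, ‖Ax − b‖² ≥ λ_min ‖x − x*‖², where x* is the Euclidean projection of x onto the solution set of Ax = b. -/

import Mathlib

open MeasureTheory ProbabilityTheory Matrix Finset
open scoped Classical

theorem stmt1
    {m n : ℕ} (hm : 0 < m) (hn : 0 < n)
    (A : Matrix (Fin m) (Fin n) ℝ) (hA : A ≠ 0)
    (b : Fin m → ℝ)
    (hconsistent : ∃ z : Fin n → ℝ, A.mulVec z = b)
    (proj : (Fin n → ℝ) → (Fin n → ℝ))
    (hproj : ∀ y : Fin n → ℝ, A.mulVec (proj y) = b ∧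
      ∀ z : Fin n → ℝ, A.mulVec z = b →
        ∑ s, (y s - proj y s) ^ 2 ≤ ∑ s, (y s - z s) ^ 2)
    (lammin : ℝ)
    (hlammin : IsLeast
      {c : ℝ | c ≠ 0 ∧ ∃ v : Fin n → ℝ, v ≠ 0 ∧ (Aᵀ * A).mulVec v = c • v} lammin)
    (x : Fin n → ℝ) :
    lammin * ∑ s, (x s - proj x s) ^ 2 ≤ ∑ i, (A.mulVec x i - b i) ^ 2 := by
  obtain ⟨hsol, hmin⟩ := hproj x
  set w : Fin n → ℝ := fun s => x s - proj x s with hw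
  -- orthogonality of w to the kernel of A
  have hkey : ∀ k : Fin n → ℝ, A.mulVec k = 0 → w ⬝ᵥ k = 0 := by
    intro k hk
    set s := w ⬝ᵥ k with hs
    set K := k ⬝ᵥ k with hKdef
    have hK0 : 0 ≤ K := Finset.sum_nonneg fun i _ => mul_self_nonneg _
    have hmain : ∀ t : ℝ, 0 ≤ -2 * t * s + t ^ 2 * K := by
      intro t
      have hz : A.mulVec (proj x + t • k) = b := by
        simp [Matrix.mulVec_add, Matrix.mulVec_smul, hk, hsol]
      have h2 := hmin (proj x + t • k) hz
      have expand : ∑ i, (x i - (proj x + t • k) i) ^ 2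
          = (∑ i, (x i - proj x i) ^ 2) + (-2 * t * s + t ^ 2 * K) := by
        have h3 : ∀ i, (x i - (proj x + t • k) i) ^ 2
            = (x i - proj x i) ^ 2 + ((-2 * t) * ((x i - proj x i) * k i)
              + t ^ 2 * (k i * k i)) := by
          intro i; simp only [Pi.add_apply, Pi.smul_apply, smul_eq_mul]; ring
        rw [Finset.sum_congr rfl fun i _ => h3 i, Finset.sum_add_distrib,
          Finset.sum_add_distrib, ← Finset.mul_sum, ← Finset.mul_sum]
        simp only [hs, hKdef, dotProduct, hw]
      rw [expand] at h2
      linarith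
    rcases eq_or_lt_of_le hK0 with hK | hK
    · have hk0 : k = 0 := dotProduct_self_eq_zero.mp hK.symm
      simp [hs, hk0]
    · have h1 := hmain (s / K)
      have h4 : -2 * (s / K) * s + (s / K) ^ 2 * K = -(s ^ 2 / K) := by
        field_simp; ring
      rw [h4] at h1
      have h5 : s ^ 2 ≤ 0 * K := (div_le_iff₀ hK).mp (by linarith : s ^ 2 / K ≤ 0)
      have h6 : s ^ 2 = 0 := le_antisymm (by linarith) (sq_nonneg s)
      exact pow_eq_zero_iff two_ne_zero |>.mp h6
  -- spectral setup
  have hM : (Aᵀ * A).IsHermitian := by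
    have h := Matrix.isHermitian_conjTranspose_mul_self A
    rwa [Matrix.conjTranspose_eq_transpose_of_trivial] at h
  set B := hM.eigenvectorBasis with hB
  set μ := hM.eigenvalues with hμ
  set c : Fin n → ℝ := fun i => (⇑(B i)) ⬝ᵥ w with hc
  have hsymm : (Aᵀ * A)ᵀ = Aᵀ * A := by
    have h := hM.eq
    rwa [Matrix.conjTranspose_eq_transpose_of_trivial] at h
  have hid : ∀ u v : EuclideanSpace ℝ (Fin n), (inner ℝ u v : ℝ) = ⇑u ⬝ᵥ ⇑v := by
    intro u v
    rw [EuclideanSpace.inner_eq_star_dotProduct]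
    exact dotProduct_comm _ _
  have hMvec : ∀ i, (Aᵀ * A) *ᵥ ⇑(B i) = μ i • ⇑(B i) := fun i =>
    hM.mulVec_eigenvectorBasis i
  set wE : EuclideanSpace ℝ (Fin n) := (WithLp.equiv 2 (Fin n → ℝ)).symm w with hwE
  have hwcoe : ⇑wE = w := rfl
  have hcoe : ∀ i, (inner ℝ wE (B i) : ℝ) = c i := by
    intro i
    rw [real_inner_comm, hid, hwcoe]
  have hcoe2 : ∀ i, (inner ℝ (B i) wE : ℝ) = c i := by
    intro i
    rw [hid, hwcoe]
  -- Parseval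
  have hpars : w ⬝ᵥ w = ∑ i, c i * c i := by
    have h := B.sum_inner_mul_inner wE wE
    rw [hid wE wE, hwcoe] at h
    rw [← h]
    exact Finset.sum_congr rfl fun i _ => by rw [hcoe i, hcoe2 i]
  -- quadratic form
  have hquad : w ⬝ᵥ ((Aᵀ * A) *ᵥ w) = ∑ i, μ i * (c i * c i) := by
    set MwE : EuclideanSpace ℝ (Fin n) := (WithLp.equiv 2 (Fin n → ℝ)).symm ((Aᵀ * A) *ᵥ w)
      with hMwE
    have hMwcoe : ⇑MwE = (Aᵀ * A) *ᵥ w := rfl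
    have h := B.sum_inner_mul_inner wE MwE
    rw [hid wE MwE, hwcoe, hMwcoe] at h
    rw [← h]
    refine Finset.sum_congr rfl fun i _ => ?_
    have hBiM : (inner ℝ (B i) MwE : ℝ) = μ i * c i := by
      rw [hid, hMwcoe]
      rw [Matrix.dotProduct_mulVec, ← hsymm, Matrix.vecMul_transpose, hMvec i,
        smul_dotProduct]
      simp [hc, smul_eq_mul]
    rw [hcoe i, hBiM]
    ring
  have hquadgen : ∀ v : Fin n → ℝ, v ⬝ᵥ ((Aᵀ * A) *ᵥ v) = (A *ᵥ v) ⬝ᵥ (A *ᵥ v) := by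
    intro v
    rw [← Matrix.mulVec_mulVec, Matrix.dotProduct_mulVec v, Matrix.vecMul_transpose]
  -- rewrite RHS
  have hAw : A *ᵥ w = fun i => A.mulVec x i - b i := by
    funext i
    have hxw : w = x - proj x := by funext s; simp [hw]
    rw [hxw, Matrix.mulVec_sub, hsol]
    rfl
  have hRHS : ∑ i, (A.mulVec x i - b i) ^ 2 = w ⬝ᵥ ((Aᵀ * A) *ᵥ w) := by
    rw [hquadgen, hAw]
    simp [dotProduct, sq]
  have hLHS : ∑ s, (x s - proj x s) ^ 2 = w ⬝ᵥ w := by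
    simp [dotProduct, hw, sq]
  rw [hLHS, hRHS, hpars, hquad, Finset.mul_sum]
  refine Finset.sum_le_sum fun i _ => ?_
  by_cases hμi : μ i = 0
  · have hABi : A *ᵥ ⇑(B i) = 0 := by
      have h0 : (A *ᵥ ⇑(B i)) ⬝ᵥ (A *ᵥ ⇑(B i)) = 0 := by
        rw [← hquadgen, hMvec i, hμi]
        simp
      exact dotProduct_self_eq_zero.mp h0
    have hci : c i = 0 := by
      have h := hkey (⇑(B i)) hABi
      rw [hc]
      simpa [dotProduct_comm] using h
    simp [hci, hμi]
  · have hmem : μ i ∈ {c : ℝ | c ≠ 0 ∧ ∃ v : Fin n → ℝ, v ≠ 0 ∧ (Aᵀ * A).mulVec v = c • v} := by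
      refine ⟨hμi, ⇑(B i), ?_, hMvec i⟩
      intro h0
      exact B.orthonormal.ne_zero i (by ext s; exact congrFun h0 s)
    have hle : lammin ≤ μ i := hlammin.2 hmem
    exact mul_le_mul_of_nonneg_right hle (mul_self_nonneg _)
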